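/- Let E be a module over L⁰ = L⁰(𝔉,ℝ) and 𝒫 a family of L⁰-seminorms on E. For finite 𝒬 ⊆ 𝒫 and ε ∈ L⁰₊₊ set U_{𝒬,ε} = {x ∈ E : ‖x‖ ≤ ε for all ‖·‖ ∈ 𝒬}. Then the family 𝒰_𝒫 = {U_{𝒬,ε} : 𝒬 ⊆ 𝒫 finite, ε ∈ L⁰₊₊} is a neighborhood base of 0 of a topology on E (namely 𝒯 = {V ⊆ E : for every y ∈ V there are finite 𝒬 ⊆ 𝒫 and ε ∈ L⁰₊₊ with y + U_{𝒬,ε} ⊆ V}), every U_{𝒬,ε} is L⁰-convex, L⁰-absorbent and L⁰-balanced, addition E × E → E is jointly continuous for 𝒯, and module multiplication L⁰ × E → E is jointly continuous when L⁰ carries 𝒯_c and E carries 𝒯. -/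

import Mathlib

noncomputable section

open MeasureTheory Set Pointwise Filter Topology

namespace PaperL0

variable {Ω : Type*} [MeasurableSpace Ω]

instance commRingL0 (μ : Measure Ω) : CommRing (Ω →ₘ[μ] ℝ) :=
  { (inferInstance : AddCommGroup (Ω →ₘ[μ] ℝ)),
    (inferInstance : CommMonoid (Ω →ₘ[μ] ℝ)) with
    left_distrib := fun f g h => MeasureTheory.AEEqFun.toGerm_injective <| by
      simp [MeasureTheory.AEEqFun.mul_toGerm, MeasureTheory.AEEqFun.add_toGerm, mul_add]
    right_distrib := fun f g h => MeasureTheory.AEEqFun.toGerm_injective <| by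
      simp [MeasureTheory.AEEqFun.mul_toGerm, MeasureTheory.AEEqFun.add_toGerm, add_mul]
    zero_mul := fun f => MeasureTheory.AEEqFun.toGerm_injective <| by
      simp [MeasureTheory.AEEqFun.mul_toGerm, MeasureTheory.AEEqFun.zero_toGerm]
    mul_zero := fun f => MeasureTheory.AEEqFun.toGerm_injective <| by
      simp [MeasureTheory.AEEqFun.mul_toGerm, MeasureTheory.AEEqFun.zero_toGerm] }

variable (μ : Measure Ω)

/-- `L⁰₊`, the set of nonnegative elements of `L⁰`. -/
def Lpos : Set (Ω →ₘ[μ] ℝ) := {ξ | 0 ≤ ξ}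

/-- `L⁰₊₊`, the set of elements of `L⁰` which are `> 0` a.e. on `Ω`. -/
def Lspos : Set (Ω →ₘ[μ] ℝ) := {ξ | ∀ᵐ ω ∂μ, 0 < ξ ω}

/-- The absolute value `|ξ|` of an element of `L⁰`. -/
def aabs {μ : Measure Ω} (ξ : Ω →ₘ[μ] ℝ) : Ω →ₘ[μ] ℝ := ξ ⊔ -ξ

/-- `B_ε = {ξ ∈ L⁰ : |ξ| ≤ ε}`. -/
def ball (ε : Ω →ₘ[μ] ℝ) : Set (Ω →ₘ[μ] ℝ) := {ξ | aabs ξ ≤ ε}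

open Classical in
/-- `Ĩ_A`, the equivalence class of the indicator function of a (measurable) set `A`. -/
def ind (A : Set Ω) : Ω →ₘ[μ] ℝ :=
  if h : MeasurableSet A then
    AEEqFun.mk (A.indicator fun _ => (1 : ℝ))
      ((measurable_const.indicator h).aestronglyMeasurable)
  else 0

/-- A countable measurable partition of `Ω`. -/
def IsMeasPartition (A : ℕ → Set Ω) : Prop :=
  (∀ n, MeasurableSet (A n)) ∧ Pairwise (Function.onFun Disjoint A) ∧ (⋃ n, A n) = Set.univ

variable {E : Type*} [AddCommGroup E] [Module (Ω →ₘ[μ] ℝ) E]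

/-- `L⁰`-convexity of a subset of an `L⁰`-module. -/
def IsL0Convex (U : Set E) : Prop :=
  ∀ x ∈ U, ∀ y ∈ U, ∀ ξ : Ω →ₘ[μ] ℝ, 0 ≤ ξ → ξ ≤ 1 → ξ • x + (1 - ξ) • y ∈ U

/-- `L⁰`-absorbency of a subset of an `L⁰`-module. -/
def IsL0Absorbent (U : Set E) : Prop := ∀ x : E, ∃ ξ ∈ Lspos μ, x ∈ ξ • U

/-- `L⁰`-balancedness of a subset of an `L⁰`-module. -/
def IsL0Balanced (U : Set E) : Prop :=
  ∀ x ∈ U, ∀ ξ : Ω →ₘ[μ] ℝ, aabs ξ ≤ 1 → ξ • x ∈ U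

/-- An `L⁰`-seminorm on an `L⁰`-module. -/
structure IsL0Seminorm (p : E → Ω →ₘ[μ] ℝ) : Prop where
  nonneg : ∀ x, 0 ≤ p x
  homog : ∀ (ξ : Ω →ₘ[μ] ℝ) (x : E), p (ξ • x) = aabs ξ * p x
  triangle : ∀ x y, p (x + y) ≤ p x + p y

/-- The countable concatenation property for a subset of an `L⁰`-module. -/
def HasCCP (G : Set E) : Prop :=
  ∀ x : ℕ → E, (∀ n, x n ∈ G) → ∀ A : ℕ → Set Ω, IsMeasPartition A →
    (∃ y : E, ∀ n, ind μ (A n) • y = ind μ (A n) • x n) ∧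
      ∀ y : E, (∀ n, ind μ (A n) • y = ind μ (A n) • x n) → y ∈ G

/-- The relative countable concatenation property for a subset of an `L⁰`-module. -/
def HasRelCCP (G : Set E) : Prop :=
  ∀ x : ℕ → E, (∀ n, x n ∈ G) → ∀ A : ℕ → Set Ω, IsMeasPartition A →
    ∀ y : E, (∀ n, ind μ (A n) • y = ind μ (A n) • x n) → y ∈ G

/-- A `P`-atom of a measure. -/
def IsPAtom (A : Set Ω) : Prop :=
  MeasurableSet A ∧ 0 < μ A ∧ ∀ B, MeasurableSet B → B ⊆ A → μ B = 0 ∨ μ B = μ A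

end PaperL0

open PaperL0

namespace PropAux

open MeasureTheory

variable {Ω : Type*} [MeasurableSpace Ω] {P : Measure Ω}

lemma le_ae {f g : Ω →ₘ[P] ℝ} (h : ∀ᵐ ω ∂P, f ω ≤ g ω) : f ≤ g :=
  AEEqFun.coeFn_le.mp h

lemma ae_le {f g : Ω →ₘ[P] ℝ} (h : f ≤ g) : ∀ᵐ ω ∂P, f ω ≤ g ω :=
  AEEqFun.coeFn_le.mpr h

lemma coeFn_aabs (ξ : Ω →ₘ[P] ℝ) : ⇑(aabs ξ) =ᵐ[P] fun ω => |ξ ω| := by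
  filter_upwards [AEEqFun.coeFn_sup ξ (-ξ), AEEqFun.coeFn_neg ξ] with ω h1 h2
  simp only [aabs, h1, h2, Pi.neg_apply]
  exact (abs_eq_max_neg (a := ξ ω)).symm

lemma lspos_iff {ε : Ω →ₘ[P] ℝ} : ε ∈ Lspos P ↔ ∀ᵐ ω ∂P, 0 < ε ω := Iff.rfl

lemma lspos_nonneg {ε : Ω →ₘ[P] ℝ} (hε : ε ∈ Lspos P) : 0 ≤ ε := by
  apply le_ae
  filter_upwards [lspos_iff.mp hε, AEEqFun.coeFn_zero (β := ℝ) (μ := P)] with ω h1 h2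
  rw [h2]; exact le_of_lt h1

lemma lspos_inf {ε δ : Ω →ₘ[P] ℝ} (hε : ε ∈ Lspos P) (hδ : δ ∈ Lspos P) :
    ε ⊓ δ ∈ Lspos P := by
  rw [lspos_iff]
  filter_upwards [lspos_iff.mp hε, lspos_iff.mp hδ, AEEqFun.coeFn_inf ε δ] with ω h1 h2 h3
  rw [h3]; exact lt_min h1 h2

lemma one_lspos : (1 : Ω →ₘ[P] ℝ) ∈ Lspos P := by
  rw [lspos_iff]
  filter_upwards [AEEqFun.coeFn_one (β := ℝ) (μ := P)] with ω h1
  rw [h1]; norm_num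

def ainv (ξ : Ω →ₘ[P] ℝ) : Ω →ₘ[P] ℝ :=
  AEEqFun.mk (fun ω => (ξ ω)⁻¹) (ξ.aemeasurable.inv.aestronglyMeasurable)

lemma coeFn_ainv (ξ : Ω →ₘ[P] ℝ) : ⇑(ainv ξ) =ᵐ[P] fun ω => (ξ ω)⁻¹ :=
  AEEqFun.coeFn_mk _ _

lemma mul_ainv {ξ : Ω →ₘ[P] ℝ} (hξ : ξ ∈ Lspos P) : ξ * ainv ξ = 1 := by
  apply AEEqFun.ext
  filter_upwards [AEEqFun.coeFn_mul ξ (ainv ξ), coeFn_ainv ξ, lspos_iff.mp hξ,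
    AEEqFun.coeFn_one (β := ℝ) (μ := P)] with ω h1 h2 h3 h4
  rw [h1, h4]; simp only [Pi.mul_apply, h2]
  exact mul_inv_cancel₀ (ne_of_gt h3)

lemma add_le_add_L0 {a b c d : Ω →ₘ[P] ℝ} (h1 : a ≤ b) (h2 : c ≤ d) : a + c ≤ b + d := by
  apply le_ae
  filter_upwards [ae_le h1, ae_le h2, AEEqFun.coeFn_add a c, AEEqFun.coeFn_add b d]
    with ω g1 g2 g3 g4
  rw [g3, g4]; exact add_le_add g1 g2

lemma mul_le_mul_L0 {a b c d : Ω →ₘ[P] ℝ} (ha : 0 ≤ a) (h1 : a ≤ b) (hc : 0 ≤ c)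
    (h2 : c ≤ d) : a * c ≤ b * d := by
  apply le_ae
  filter_upwards [ae_le ha, ae_le h1, ae_le hc, ae_le h2, AEEqFun.coeFn_mul a c,
    AEEqFun.coeFn_mul b d, AEEqFun.coeFn_zero (β := ℝ) (μ := P)] with ω g1 g2 g3 g4 g5 g6 g7
  rw [g5, g6]
  rw [g7, Pi.zero_apply] at g1 g3
  exact mul_le_mul g2 g4 g3 (le_trans g1 g2)

lemma le_add_of_nonneg_L0 {a δ : Ω →ₘ[P] ℝ} (h : 0 ≤ δ) : a ≤ a + δ := by
  apply le_ae
  filter_upwards [ae_le h, AEEqFun.coeFn_add a δ, AEEqFun.coeFn_zero (β := ℝ) (μ := P)]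
    with ω g1 g2 g3
  rw [g2]; rw [g3, Pi.zero_apply] at g1; simp only [Pi.add_apply]; linarith

lemma aabs_nonneg (ξ : Ω →ₘ[P] ℝ) : 0 ≤ aabs ξ := by
  apply le_ae
  filter_upwards [coeFn_aabs ξ, AEEqFun.coeFn_zero (β := ℝ) (μ := P)] with ω h1 h2
  rw [h1, h2]; exact abs_nonneg _

lemma aabs_zero : aabs (0 : Ω →ₘ[P] ℝ) = 0 := by
  apply AEEqFun.ext
  filter_upwards [coeFn_aabs (0 : Ω →ₘ[P] ℝ), AEEqFun.coeFn_zero (β := ℝ) (μ := P)]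
    with ω h1 h2
  rw [h1, h2]; simp [h2]

lemma aabs_triangle (a b : Ω →ₘ[P] ℝ) : aabs (a + b) ≤ aabs a + aabs b := by
  apply le_ae
  filter_upwards [coeFn_aabs (a + b), coeFn_aabs a, coeFn_aabs b,
    AEEqFun.coeFn_add a b, AEEqFun.coeFn_add (aabs a) (aabs b)] with ω h1 h2 h3 h4 h5
  rw [h1, h5]; simp only [Pi.add_apply, h2, h3, h4]
  exact abs_add_le _ _

lemma half {ε : Ω →ₘ[P] ℝ} (hε : ε ∈ Lspos P) :
    ∃ δ ∈ Lspos P, δ + δ ≤ ε ∧ δ ≤ ε := by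
  refine ⟨(AEEqFun.const Ω (2⁻¹ : ℝ) : Ω →ₘ[P] ℝ) * ε, ?_, ?_, ?_⟩
  · rw [lspos_iff]
    filter_upwards [lspos_iff.mp hε, AEEqFun.coeFn_mul (AEEqFun.const Ω (2⁻¹ : ℝ)) ε,
      AEEqFun.coeFn_const Ω (2⁻¹ : ℝ) (μ := P)] with ω h1 h2 h3
    rw [h2]; simp only [Pi.mul_apply, h3, Function.const]
    positivity
  · apply le_ae
    filter_upwards [lspos_iff.mp hε,
      AEEqFun.coeFn_add ((AEEqFun.const Ω (2⁻¹ : ℝ) : Ω →ₘ[P] ℝ) * ε)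
        ((AEEqFun.const Ω (2⁻¹ : ℝ) : Ω →ₘ[P] ℝ) * ε),
      AEEqFun.coeFn_mul (AEEqFun.const Ω (2⁻¹ : ℝ)) ε,
      AEEqFun.coeFn_const Ω (2⁻¹ : ℝ) (μ := P)] with ω h1 h2 h3 h4
    rw [h2]; simp only [Pi.add_apply, h3, Pi.mul_apply, h4, Function.const]
    linarith
  · apply le_ae
    filter_upwards [lspos_iff.mp hε, AEEqFun.coeFn_mul (AEEqFun.const Ω (2⁻¹ : ℝ)) ε,
      AEEqFun.coeFn_const Ω (2⁻¹ : ℝ) (μ := P)] with ω h1 h2 h3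
    rw [h2]; simp only [Pi.mul_apply, h3, Function.const]
    linarith

section Sem

variable {E : Type*} [AddCommGroup E] [Module (Ω →ₘ[P] ℝ) E]

lemma seminorm_zero {p : E → Ω →ₘ[P] ℝ} (hp : IsL0Seminorm P p) : p 0 = 0 := by
  have h := hp.homog 0 0
  rw [zero_smul] at h
  rw [h, aabs_zero, zero_mul]

omit [AddCommGroup E] [Module (Ω →ₘ[P] ℝ) E] in
lemma exists_bound (Qs : Set (E → Ω →ₘ[P] ℝ)) (hfin : Qs.Finite) (x : E) :
    ∃ S : Ω →ₘ[P] ℝ, 0 ≤ S ∧ ∀ p ∈ Qs, p x ≤ S := by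
  refine Set.Finite.induction_on (motive := fun Qs _ => ∃ S : Ω →ₘ[P] ℝ, 0 ≤ S ∧ ∀ p ∈ Qs, p x ≤ S) Qs hfin ⟨0, le_rfl, fun p hp => absurd hp (Set.notMem_empty p)⟩ ?_
  rintro q Qs' hq hfin' ⟨S, hS0, hS⟩
  refine ⟨(q x ⊔ 0) ⊔ S, le_trans hS0 le_sup_right, fun p hp => ?_⟩
  rcases Set.mem_insert_iff.mp hp with h | h
  · subst h; exact le_trans le_sup_left le_sup_left
  · exact le_trans (hS p h) le_sup_right

/-- The topology on `E` generated by the family of seminorms. -/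
def Ttop (Ps : Set (E → Ω →ₘ[P] ℝ)) : TopologicalSpace E where
  IsOpen V := ∀ y ∈ V, ∃ Qs : Set (E → Ω →ₘ[P] ℝ), Qs.Finite ∧ Qs ⊆ Ps ∧
      ∃ ε ∈ Lspos P, ∀ u : E, (∀ p ∈ Qs, p u ≤ ε) → y + u ∈ V
  isOpen_univ := fun _ _ => ⟨∅, Set.finite_empty, Set.empty_subset _,
    ⟨1, one_lspos, fun _ _ => Set.mem_univ _⟩⟩
  isOpen_inter := by
    intro V W hV hW y hy
    obtain ⟨Q1, hf1, hs1, ε1, hε1, h1⟩ := hV y hy.1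
    obtain ⟨Q2, hf2, hs2, ε2, hε2, h2⟩ := hW y hy.2
    refine ⟨Q1 ∪ Q2, hf1.union hf2, Set.union_subset hs1 hs2, ε1 ⊓ ε2,
      lspos_inf hε1 hε2, fun u hu => ?_⟩
    exact ⟨h1 u (fun p hp => le_trans (hu p (Set.mem_union_left _ hp)) inf_le_left),
      h2 u (fun p hp => le_trans (hu p (Set.mem_union_right _ hp)) inf_le_right)⟩
  isOpen_sUnion := by
    intro S hS y hy
    obtain ⟨V, hVS, hyV⟩ := hy
    obtain ⟨Qs, hf, hs, ε, hε, h⟩ := hS V hVS y hyV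
    exact ⟨Qs, hf, hs, ε, hε, fun u hu => Set.mem_sUnion.mpr ⟨V, hVS, h u hu⟩⟩

lemma ttop_isOpen_iff {Ps : Set (E → Ω →ₘ[P] ℝ)} {V : Set E} :
    IsOpen[Ttop Ps] V ↔ ∀ y ∈ V, ∃ Qs : Set (E → Ω →ₘ[P] ℝ), Qs.Finite ∧ Qs ⊆ Ps ∧
      ∃ ε ∈ Lspos P, ∀ u : E, (∀ p ∈ Qs, p u ≤ ε) → y + u ∈ V := Iff.rfl

/-- Open "ball" of radius `ε` around `c` for a finite family of seminorms. -/
def Vopen (Qs : Set (E → Ω →ₘ[P] ℝ)) (ε : Ω →ₘ[P] ℝ) (c : E) : Set E :=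
  {y | ∃ δ ∈ Lspos P, ∀ p ∈ Qs, p (y - c) + δ ≤ ε}

lemma vopen_mem_self {Qs : Set (E → Ω →ₘ[P] ℝ)} {ε : Ω →ₘ[P] ℝ} (hε : ε ∈ Lspos P)
    (hQ : ∀ p ∈ Qs, IsL0Seminorm P p) (c : E) : c ∈ Vopen Qs ε c :=
  ⟨ε, hε, fun p hp => by rw [sub_self, seminorm_zero (hQ p hp), zero_add]⟩

lemma vopen_subset {Qs : Set (E → Ω →ₘ[P] ℝ)} {ε : Ω →ₘ[P] ℝ} {c y : E}
    (hy : y ∈ Vopen Qs ε c) : ∀ p ∈ Qs, p (y - c) ≤ ε := by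
  obtain ⟨δ, hδ, h⟩ := hy
  exact fun p hp => le_trans (le_add_of_nonneg_L0 (lspos_nonneg hδ)) (h p hp)

lemma vopen_isOpen {Ps Qs : Set (E → Ω →ₘ[P] ℝ)} {ε : Ω →ₘ[P] ℝ} {c : E}
    (hfin : Qs.Finite) (hsub : Qs ⊆ Ps) (hQ : ∀ p ∈ Qs, IsL0Seminorm P p) :
    IsOpen[Ttop Ps] (Vopen Qs ε c) := by
  rw [ttop_isOpen_iff]
  intro y hy
  obtain ⟨δ, hδ, hyδ⟩ := hy
  obtain ⟨δ', hδ', hδ'2, _⟩ := half hδ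
  refine ⟨Qs, hfin, hsub, δ', hδ', fun u hu => ⟨δ', hδ', fun p hp => ?_⟩⟩
  have e : y + u - c = (y - c) + u := by abel
  rw [e]
  calc p ((y - c) + u) + δ'
      ≤ (p (y - c) + p u) + δ' := add_le_add_L0 ((hQ p hp).triangle _ _) le_rfl
    _ ≤ (p (y - c) + δ') + δ' := add_le_add_L0 (add_le_add_L0 le_rfl (hu p hp)) le_rfl
    _ = p (y - c) + (δ' + δ') := by rw [add_assoc]
    _ ≤ p (y - c) + δ := add_le_add_L0 le_rfl hδ'2
    _ ≤ ε := hyδ p hp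

end Sem

end PropAux

/-- Proposition 2.4 of FKV: the family of sets U_{Qs,ε} determined by a family Ps of
L⁰-seminorms is a neighborhood base of 0 of a locally L⁰-convex topology. -/
theorem statement1
    {Ω : Type*} [MeasurableSpace Ω] (P : Measure Ω) [IsProbabilityMeasure P]
    {E : Type*} [AddCommGroup E] [Module (Ω →ₘ[P] ℝ) E]
    (Ps : Set (E → Ω →ₘ[P] ℝ)) (hP : ∀ p ∈ Ps, IsL0Seminorm P p) :
    ∃ T : TopologicalSpace E,
      (∀ V : Set E, IsOpen[T] V ↔ ∀ y ∈ V, ∃ Qs : Set (E → Ω →ₘ[P] ℝ), Qs.Finite ∧ Qs ⊆ Ps ∧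
          ∃ ε ∈ Lspos P, ∀ u : E, (∀ p ∈ Qs, p u ≤ ε) → y + u ∈ V) ∧
      (@nhds E T 0).HasBasis
        (fun Qε : Set (E → Ω →ₘ[P] ℝ) × (Ω →ₘ[P] ℝ) =>
          Qε.1.Finite ∧ Qε.1 ⊆ Ps ∧ Qε.2 ∈ Lspos P)
        (fun Qε => {x : E | ∀ p ∈ Qε.1, p x ≤ Qε.2}) ∧
      (∀ Qs : Set (E → Ω →ₘ[P] ℝ), Qs.Finite → Qs ⊆ Ps → ∀ ε ∈ Lspos P,
        IsL0Convex P {x : E | ∀ p ∈ Qs, p x ≤ ε} ∧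
        IsL0Absorbent P {x : E | ∀ p ∈ Qs, p x ≤ ε} ∧
        IsL0Balanced P {x : E | ∀ p ∈ Qs, p x ≤ ε}) ∧
      Continuous[@instTopologicalSpaceProd E E T T, T] (fun p : E × E => p.1 + p.2) ∧
      ∀ Tc : TopologicalSpace (Ω →ₘ[P] ℝ),
        (∀ W : Set (Ω →ₘ[P] ℝ),
            IsOpen[Tc] W ↔ ∀ ξ ∈ W, ∃ ε ∈ Lspos P, ∀ η ∈ ball P ε, ξ + η ∈ W) →
        Continuous[@instTopologicalSpaceProd (Ω →ₘ[P] ℝ) E Tc T, T]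
          (fun p : (Ω →ₘ[P] ℝ) × E => p.1 • p.2) := by
  classical
  letI T : TopologicalSpace E := PropAux.Ttop Ps
  have hQsem : ∀ Qs : Set (E → Ω →ₘ[P] ℝ), Qs ⊆ Ps → ∀ p ∈ Qs, IsL0Seminorm P p :=
    fun Qs hsub p hp => hP p (hsub hp)
  refine ⟨T, fun V => Iff.rfl, ?_, ?_, ?_, ?_⟩
  · -- neighborhood basis of 0
    rw [Filter.hasBasis_iff]
    intro t
    constructor
    · intro ht
      obtain ⟨V, hVt, hVopen, h0V⟩ := mem_nhds_iff.mp ht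
      obtain ⟨Qs, hfin, hsub, ε, hε, h⟩ := PropAux.ttop_isOpen_iff.mp hVopen 0 h0V
      refine ⟨(Qs, ε), ⟨hfin, hsub, hε⟩, fun x hx => hVt ?_⟩
      have := h x hx
      rwa [zero_add] at this
    · rintro ⟨⟨Qs, ε⟩, ⟨hfin, hsub, hε⟩, hst⟩
      refine mem_nhds_iff.mpr ⟨PropAux.Vopen Qs ε (0 : E), ?_,
        PropAux.vopen_isOpen hfin hsub (hQsem Qs hsub),
        PropAux.vopen_mem_self hε (hQsem Qs hsub) 0⟩
      intro y hy
      apply hst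
      intro p hp
      have := PropAux.vopen_subset hy p hp
      rwa [sub_zero] at this
  · -- convexity, absorbency, balancedness
    intro Qs hfin hsub ε hε
    have hQ := hQsem Qs hsub
    refine ⟨?_, ?_, ?_⟩
    · -- convex
      intro x hx y hy ξ hξ0 hξ1 p hp
      calc p (ξ • x + (1 - ξ) • y)
          ≤ p (ξ • x) + p ((1 - ξ) • y) := (hQ p hp).triangle _ _
        _ = aabs ξ * p x + aabs (1 - ξ) * p y := by
            rw [(hQ p hp).homog, (hQ p hp).homog]
        _ ≤ ε := by
            apply PropAux.le_ae
            filter_upwards [PropAux.ae_le hξ0, PropAux.ae_le hξ1,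
              PropAux.ae_le (hx p hp), PropAux.ae_le (hy p hp),
              PropAux.ae_le ((hQ p hp).nonneg x), PropAux.ae_le ((hQ p hp).nonneg y),
              MeasureTheory.AEEqFun.coeFn_add (aabs ξ * p x) (aabs (1 - ξ) * p y),
              MeasureTheory.AEEqFun.coeFn_mul (aabs ξ) (p x),
              MeasureTheory.AEEqFun.coeFn_mul (aabs (1 - ξ)) (p y),
              PropAux.coeFn_aabs ξ, PropAux.coeFn_aabs (1 - ξ),
              MeasureTheory.AEEqFun.coeFn_sub (1 : Ω →ₘ[P] ℝ) ξ,
              MeasureTheory.AEEqFun.coeFn_one (β := ℝ) (μ := P),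
              MeasureTheory.AEEqFun.coeFn_zero (β := ℝ) (μ := P)]
              with ω g0 g1 gx gy gnx gny ga gm1 gm2 gab1 gab2 gsub gone gzero
            rw [ga]
            simp only [Pi.add_apply, gm1, Pi.mul_apply, gm2, gab1, gab2, gsub,
              Pi.sub_apply, gone, Pi.one_apply] at *
            rw [gzero] at g0; rw [Pi.zero_apply] at g0
            rw [abs_of_nonneg g0, abs_of_nonneg (by linarith : (0:ℝ) ≤ 1 - ξ ω)]
            nlinarith
    · -- absorbent
      intro x
      obtain ⟨S, hS0, hS⟩ := PropAux.exists_bound Qs hfin x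
      set ξ : Ω →ₘ[P] ℝ := 1 + S * PropAux.ainv ε with hξdef
      have hξpos : ξ ∈ Lspos P := by
        rw [PropAux.lspos_iff]
        filter_upwards [MeasureTheory.AEEqFun.coeFn_add (1 : Ω →ₘ[P] ℝ) (S * PropAux.ainv ε),
          MeasureTheory.AEEqFun.coeFn_mul S (PropAux.ainv ε), PropAux.coeFn_ainv ε,
          PropAux.lspos_iff.mp hε, PropAux.ae_le hS0,
          MeasureTheory.AEEqFun.coeFn_one (β := ℝ) (μ := P),
          MeasureTheory.AEEqFun.coeFn_zero (β := ℝ) (μ := P)]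
          with ω g1 g2 g3 g4 g5 g6 g7
        rw [g7, Pi.zero_apply] at g5
        rw [hξdef]
        rw [g1]
        simp only [Pi.add_apply, g2, Pi.mul_apply, g3, g6, Pi.one_apply]
        have : 0 ≤ S ω * (ε ω)⁻¹ := mul_nonneg g5 (inv_nonneg.mpr (le_of_lt g4))
        linarith
      refine ⟨ξ, hξpos, Set.mem_smul_set.mpr ⟨PropAux.ainv ξ • x, ?_, ?_⟩⟩
      · intro p hp
        rw [(hQ p hp).homog]
        apply PropAux.le_ae
        filter_upwards [MeasureTheory.AEEqFun.coeFn_mul (aabs (PropAux.ainv ξ)) (p x),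
          PropAux.coeFn_aabs (PropAux.ainv ξ), PropAux.coeFn_ainv ξ,
          MeasureTheory.AEEqFun.coeFn_add (1 : Ω →ₘ[P] ℝ) (S * PropAux.ainv ε),
          MeasureTheory.AEEqFun.coeFn_mul S (PropAux.ainv ε), PropAux.coeFn_ainv ε,
          PropAux.lspos_iff.mp hε, PropAux.ae_le hS0, PropAux.ae_le (hS p hp),
          PropAux.ae_le ((hQ p hp).nonneg x),
          MeasureTheory.AEEqFun.coeFn_one (β := ℝ) (μ := P),
          MeasureTheory.AEEqFun.coeFn_zero (β := ℝ) (μ := P)]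
          with ω g1 g2 g3 g4 g5 g6 g7 g8 g9 g10 g11 g12
        rw [g12, Pi.zero_apply] at g8 g10
        have hξω : ξ ω = 1 + S ω * (ε ω)⁻¹ := by
          rw [hξdef, g4]
          simp only [Pi.add_apply, g5, Pi.mul_apply, g6, g11, Pi.one_apply]
        have hpos : (0:ℝ) < 1 + S ω * (ε ω)⁻¹ := by
          have : 0 ≤ S ω * (ε ω)⁻¹ := mul_nonneg g8 (inv_nonneg.mpr (le_of_lt g7))
          linarith
        rw [g1]
        simp only [Pi.mul_apply, g2, g3, hξω]
        rw [abs_of_pos (inv_pos.mpr hpos), inv_mul_le_iff₀ hpos]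
        have heq : (1 + S ω * (ε ω)⁻¹) * ε ω = ε ω + S ω := by
          field_simp
        rw [heq]
        linarith
      · rw [← mul_smul, PropAux.mul_ainv hξpos, one_smul]
    · -- balanced
      intro x hx ξ hξ p hp
      rw [(hQ p hp).homog]
      calc aabs ξ * p x ≤ 1 * p x :=
            PropAux.mul_le_mul_L0 (PropAux.aabs_nonneg ξ) hξ ((hQ p hp).nonneg x) le_rfl
        _ = p x := one_mul _
        _ ≤ ε := hx p hp
  · -- continuity of addition
    rw [continuous_def]
    intro V hV
    rw [isOpen_prod_iff]
    intro a b hab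
    obtain ⟨Qs, hfin, hsub, ε, hε, h⟩ := PropAux.ttop_isOpen_iff.mp hV (a + b) hab
    obtain ⟨δ, hδ, hδ2, _⟩ := PropAux.half hε
    have hQ := hQsem Qs hsub
    refine ⟨PropAux.Vopen Qs δ a, PropAux.Vopen Qs δ b,
      PropAux.vopen_isOpen hfin hsub hQ, PropAux.vopen_isOpen hfin hsub hQ,
      PropAux.vopen_mem_self hδ hQ a, PropAux.vopen_mem_self hδ hQ b, ?_⟩
    rintro ⟨y, z⟩ ⟨hy, hz⟩
    have hyz : ∀ p ∈ Qs, p (y + z - (a + b)) ≤ ε := by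
      intro p hp
      have e : y + z - (a + b) = (y - a) + (z - b) := by abel
      rw [e]
      calc p ((y - a) + (z - b)) ≤ p (y - a) + p (z - b) := (hQ p hp).triangle _ _
        _ ≤ δ + δ := PropAux.add_le_add_L0 (PropAux.vopen_subset hy p hp)
            (PropAux.vopen_subset hz p hp)
        _ ≤ ε := hδ2
    have := h (y + z - (a + b)) hyz
    rw [show a + b + (y + z - (a + b)) = y + z by abel] at this
    exact this
  · -- continuity of scalar multiplication
    intro Tc hTc
    rw [continuous_def]
    intro V hV
    rw [isOpen_prod_iff]
    intro ξ₀ x₀ h0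
    obtain ⟨Qs, hfin, hsub, ε, hε, h⟩ := PropAux.ttop_isOpen_iff.mp hV (ξ₀ • x₀) h0
    have hQ := hQsem Qs hsub
    obtain ⟨S, hS0, hS⟩ := PropAux.exists_bound Qs hfin x₀
    set M : Ω →ₘ[P] ℝ := aabs ξ₀ with hM
    set ζ : Ω →ₘ[P] ℝ := (AEEqFun.const Ω (3:ℝ)) * (1 + S + M) with hζ
    set θ : Ω →ₘ[P] ℝ := ε * PropAux.ainv ζ with hθ
    set δ : Ω →ₘ[P] ℝ := θ ⊓ 1 with hδdef
    have hζfacts : ∀ᵐ ω ∂P, ζ ω = 3 * (1 + S ω + M ω) ∧ 0 ≤ S ω ∧ 0 ≤ M ω := by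
      filter_upwards [MeasureTheory.AEEqFun.coeFn_mul (AEEqFun.const Ω (3:ℝ)) (1 + S + M),
        MeasureTheory.AEEqFun.coeFn_add ((1 : Ω →ₘ[P] ℝ) + S) M,
        MeasureTheory.AEEqFun.coeFn_add (1 : Ω →ₘ[P] ℝ) S,
        MeasureTheory.AEEqFun.coeFn_const Ω (3:ℝ) (μ := P),
        MeasureTheory.AEEqFun.coeFn_one (β := ℝ) (μ := P),
        MeasureTheory.AEEqFun.coeFn_zero (β := ℝ) (μ := P),
        PropAux.ae_le hS0, PropAux.ae_le (PropAux.aabs_nonneg ξ₀)]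
        with ω g1 g2 g3 g4 g5 g6 g7 g8
      rw [g6, Pi.zero_apply] at g7 g8
      refine ⟨?_, g7, g8⟩
      rw [hζ, g1]
      simp only [Pi.mul_apply, g2, Pi.add_apply, g3, g4, g5, Pi.one_apply, Function.const]
    have hθfact : ∀ᵐ ω ∂P, θ ω = ε ω * (ζ ω)⁻¹ := by
      filter_upwards [MeasureTheory.AEEqFun.coeFn_mul ε (PropAux.ainv ζ),
        PropAux.coeFn_ainv ζ] with ω g1 g2
      rw [hθ, g1]; simp only [Pi.mul_apply, g2]
    have hθpos : θ ∈ Lspos P := by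
      rw [PropAux.lspos_iff]
      filter_upwards [hθfact, hζfacts, PropAux.lspos_iff.mp hε] with ω g1 ⟨g2, g3, g4⟩ g5
      rw [g1, g2]
      have : (0:ℝ) < 3 * (1 + S ω + M ω) := by positivity
      positivity
    have hδpos : δ ∈ Lspos P := PropAux.lspos_inf hθpos PropAux.one_lspos
    have hkey : δ * δ + δ * S + M * δ ≤ ε := by
      apply PropAux.le_ae
      filter_upwards [hθfact, hζfacts, PropAux.lspos_iff.mp hε,
        MeasureTheory.AEEqFun.coeFn_inf θ (1 : Ω →ₘ[P] ℝ),
        MeasureTheory.AEEqFun.coeFn_add (δ * δ + δ * S) (M * δ),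
        MeasureTheory.AEEqFun.coeFn_add (δ * δ) (δ * S),
        MeasureTheory.AEEqFun.coeFn_mul δ δ, MeasureTheory.AEEqFun.coeFn_mul δ S,
        MeasureTheory.AEEqFun.coeFn_mul M δ,
        MeasureTheory.AEEqFun.coeFn_one (β := ℝ) (μ := P)]
        with ω g1 ⟨g2, g3, g4⟩ g5 g6 g7 g8 g9 g10 g11 g12
      have hδω : δ ω = min (θ ω) 1 := by rw [hδdef, g6, g12]; rfl
      rw [g7]
      simp only [Pi.add_apply, g8, g9, Pi.mul_apply, g10, g11]
      set s := S ω
      set m := M ω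
      set e := ε ω
      set d := δ ω
      have h3pos : (0:ℝ) < 3 * (1 + s + m) := by positivity
      have htval : θ ω = e * (3 * (1 + s + m))⁻¹ := by rw [g1, g2]
      have htpos : 0 < θ ω := by rw [htval]; positivity
      have hdt : d ≤ θ ω := by rw [hδω]; exact min_le_left _ _
      have hd1 : d ≤ 1 := by rw [hδω]; exact min_le_right _ _
      have hd0 : 0 ≤ d := by rw [hδω]; exact le_min (le_of_lt htpos) zero_le_one
      have ht3 : θ ω * (3 * (1 + s + m)) = e := by
        rw [htval]; field_simp
      have h1 : d * d ≤ θ ω * 1 := mul_le_mul hdt hd1 hd0 (le_of_lt htpos)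
      have h2 : d * s ≤ θ ω * s := mul_le_mul_of_nonneg_right hdt g3
      have h3 : m * d ≤ m * θ ω := mul_le_mul_of_nonneg_left hdt g4
      nlinarith [htpos, g3, g4, g5]
    set A : Set (Ω →ₘ[P] ℝ) := {ξ | ∃ ρ ∈ Lspos P, aabs (ξ - ξ₀) + ρ ≤ δ} with hA
    have hAopen : IsOpen[Tc] A := by
      rw [hTc A]
      rintro ξ ⟨ρ, hρ, hρle⟩
      obtain ⟨ρ', hρ', hρ'2, _⟩ := PropAux.half hρ
      refine ⟨ρ', hρ', fun η hη => ⟨ρ', hρ', ?_⟩⟩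
      have e : ξ + η - ξ₀ = (ξ - ξ₀) + η := by ring
      rw [e]
      calc aabs ((ξ - ξ₀) + η) + ρ'
          ≤ (aabs (ξ - ξ₀) + aabs η) + ρ' :=
            PropAux.add_le_add_L0 (PropAux.aabs_triangle _ _) le_rfl
        _ ≤ (aabs (ξ - ξ₀) + ρ') + ρ' :=
            PropAux.add_le_add_L0 (PropAux.add_le_add_L0 le_rfl hη) le_rfl
        _ = aabs (ξ - ξ₀) + (ρ' + ρ') := by rw [add_assoc]
        _ ≤ aabs (ξ - ξ₀) + ρ := PropAux.add_le_add_L0 le_rfl hρ'2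
        _ ≤ δ := hρle
    have hξ₀A : ξ₀ ∈ A := ⟨δ, hδpos, by rw [sub_self, PropAux.aabs_zero, zero_add]⟩
    refine ⟨A, PropAux.Vopen Qs δ x₀, hAopen, PropAux.vopen_isOpen hfin hsub hQ,
      hξ₀A, PropAux.vopen_mem_self hδpos hQ x₀, ?_⟩
    rintro ⟨ξ, x⟩ ⟨hξA, hxB⟩
    obtain ⟨ρ, hρ, hρle⟩ := hξA
    have ha : aabs (ξ - ξ₀) ≤ δ :=
      le_trans (PropAux.le_add_of_nonneg_L0 (PropAux.lspos_nonneg hρ)) hρle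
    have hu : ∀ p ∈ Qs, p (ξ • x - ξ₀ • x₀) ≤ ε := by
      intro p hp
      have e : ξ • x - ξ₀ • x₀ =
          (ξ - ξ₀) • (x - x₀) + ((ξ - ξ₀) • x₀ + ξ₀ • (x - x₀)) := by
        module
      rw [e]
      calc p ((ξ - ξ₀) • (x - x₀) + ((ξ - ξ₀) • x₀ + ξ₀ • (x - x₀)))
          ≤ p ((ξ - ξ₀) • (x - x₀)) + p ((ξ - ξ₀) • x₀ + ξ₀ • (x - x₀)) :=
            (hQ p hp).triangle _ _
        _ ≤ p ((ξ - ξ₀) • (x - x₀)) + (p ((ξ - ξ₀) • x₀) + p (ξ₀ • (x - x₀))) :=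
            PropAux.add_le_add_L0 le_rfl ((hQ p hp).triangle _ _)
        _ = aabs (ξ - ξ₀) * p (x - x₀) + (aabs (ξ - ξ₀) * p x₀ + M * p (x - x₀)) := by
            rw [(hQ p hp).homog, (hQ p hp).homog, (hQ p hp).homog]
        _ ≤ δ * δ + (δ * S + M * δ) := by
            refine PropAux.add_le_add_L0 ?_ (PropAux.add_le_add_L0 ?_ ?_)
            · exact PropAux.mul_le_mul_L0 (PropAux.aabs_nonneg _) ha
                ((hQ p hp).nonneg _) (PropAux.vopen_subset hxB p hp)
            · exact PropAux.mul_le_mul_L0 (PropAux.aabs_nonneg _) ha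
                ((hQ p hp).nonneg _) (hS p hp)
            · exact PropAux.mul_le_mul_L0 (PropAux.aabs_nonneg ξ₀) le_rfl
                ((hQ p hp).nonneg _) (PropAux.vopen_subset hxB p hp)
        _ = δ * δ + δ * S + M * δ := by ring
        _ ≤ ε := hkey
    have := h (ξ • x - ξ₀ • x₀) hu
    rw [show ξ₀ • x₀ + (ξ • x - ξ₀ • x₀) = ξ • x by abel] at this
    exact this
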